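/- Let F be a field of characteristic not 2, let Q = (a,b)_F be a quaternion algebra with norm form n_Q, and let q be a quadratic form over F. If the quadratic form n_Q ⊗ q is isotropic, then the hermitian form over Q with diagonalization given by the entries of q (with respect to the canonical involution) is isotropic; conversely, if n_Q ⊗ q is anisotropic then the corresponding diagonal hermitian form ⟨a₁,…,aₙ⟩_Q is anisotropic. -/

import Mathlib

open scoped Quaternion

private lemma star_mul_self_eq (F : Type*) [Field F] (a b : F) (x : ℍ[F,a,b]) :
    star x * x = algebraMap F ℍ[F,a,b] (x.re^2 - a*x.imI^2 - b*x.imJ^2 + a*b*x.imK^2) := by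
  ext <;> simp [QuaternionAlgebra.re_star, QuaternionAlgebra.imI_star,
    QuaternionAlgebra.imJ_star, QuaternionAlgebra.imK_star, Algebra.algebraMap_eq_smul_one] <;> ring

/-- Let `Q = (a,b)_F` be a quaternion algebra with norm form
`n_Q = ⟨1,-a,-b,ab⟩` and let `q = ⟨d₁,…,dₙ⟩` be a diagonal quadratic form over `F`.
Then the quadratic form `n_Q ⊗ q` (on `F^{4n}`) is anisotropic iff the diagonal
hermitian form `⟨d₁,…,dₙ⟩_Q` (with respect to the canonical involution of `Q`)
is anisotropic. -/
theorem hermitian_aniso_iff_norm_tensor_aniso (F : Type*) [Field F] (hchar : (2 : F) ≠ 0)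
    (a b : F) (ha : a ≠ 0) (hb : b ≠ 0)
    (n : ℕ) (d : Fin n → F) (hd : ∀ i, d i ≠ 0) :
    (∀ v : Fin n → Fin 4 → F,
        (∑ i, d i * (v i 0 ^ 2 - a * v i 1 ^ 2 - b * v i 2 ^ 2 + a * b * v i 3 ^ 2)) = 0 →
          v = 0)
      ↔
    (∀ x : Fin n → ℍ[F, a, b],
        (∑ i, star (x i) * algebraMap F ℍ[F, a, b] (d i) * x i) = 0 → x = 0) := by
  have key : ∀ x : Fin n → ℍ[F, a, b],
      (∑ i, star (x i) * algebraMap F ℍ[F, a, b] (d i) * x i)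
        = algebraMap F ℍ[F, a, b] (∑ i, d i *
          ((x i).re^2 - a*(x i).imI^2 - b*(x i).imJ^2 + a*b*(x i).imK^2)) := by
    intro x
    rw [map_sum]
    refine Finset.sum_congr rfl fun i _ => ?_
    rw [← Algebra.commutes (d i) (star (x i)), mul_assoc,
      star_mul_self_eq, ← map_mul]
  have hinj : Function.Injective (algebraMap F ℍ[F, a, b]) :=
    (algebraMap F ℍ[F, a, b]).injective
  constructor
  · intro H x hx
    rw [key, ← map_zero (algebraMap F ℍ[F, a, b])] at hx
    have h0 := hinj hx
    have := H (fun i => ![(x i).re, (x i).imI, (x i).imJ, (x i).imK]) (by simpa using h0)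
    funext i
    have h1 := congrFun this i
    ext
    · simpa using congrFun h1 0
    · simpa using congrFun h1 1
    · simpa using congrFun h1 2
    · simpa using congrFun h1 3
  · intro H v hv
    set x : Fin n → ℍ[F, a, b] := fun i => ⟨v i 0, v i 1, v i 2, v i 3⟩ with hxdef
    have := H x (by rw [key]; simpa using congrArg (algebraMap F ℍ[F, a, b]) hv)
    funext i k
    have h1 : x i = 0 := congrFun this i
    fin_cases k
    · exact congrArg QuaternionAlgebra.re h1
    · exact congrArg QuaternionAlgebra.imI h1
    · exact congrArg QuaternionAlgebra.imJ h1
    · exact congrArg QuaternionAlgebra.imK h1
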